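/- Let U ⊆ ℂ^n be open and connected with u_a ≠ u_b for every u ∈ U and all a ≠ b. Let A : U → M_n(ℂ) be differentiable, set B_k(u) := −E_k(A(u)+I) and γ_k := ω_k(u,A(u)), and assume the non-normalized Schlesinger equations hold: ∂_i B_k = [B_i, B_k]/(u_i − u_k) + [γ_i, B_k] for i ≠ k and ∂_i B_i = −∑_{k≠i} [B_i, B_k]/(u_i − u_k) + [γ_i, B_i] for every i. Fix an index i and let G : U → GL_n(ℂ) be differentiable with ∂_k G = (B_k/(u_k − u_i) + γ_k)G for every k ≠ i and ∂_i G = −∑_{k≠i} (B_k/(u_k − u_i) + γ_k)G. Then the map u ↦ G(u)^{-1} B_i(u) G(u) is constant on U. -/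

import Mathlib

open Matrix

/-- `ω_j(u,A)`: the matrix whose `(a,b)` entry is `A_{ab}(δ_{aj} − δ_{bj})/(u_a − u_b)`
for `a ≠ b`, and whose diagonal entries are `0`. -/
noncomputable def omegaMat {n : ℕ} (u : Fin n → ℂ) (A : Matrix (Fin n) (Fin n) ℂ)
    (j : Fin n) : Matrix (Fin n) (Fin n) ℂ :=
  Matrix.of fun a b =>
    if a = b then 0
    else A a b * ((if a = j then (1 : ℂ) else 0) - (if b = j then (1 : ℂ) else 0)) / (u a - u b)

/-- The complex partial derivative `∂_j f` in the `j`-th coordinate. -/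
noncomputable def pd {n : ℕ} (j : Fin n) (f : (Fin n → ℂ) → ℂ) (u : Fin n → ℂ) : ℂ :=
  fderiv ℂ f u (Pi.single j 1)

/-- Entrywise partial derivative `∂_j A` of a matrix-valued map. -/
noncomputable def mpd {n : ℕ} (j : Fin n) (A : (Fin n → ℂ) → Matrix (Fin n) (Fin n) ℂ)
    (u : Fin n → ℂ) : Matrix (Fin n) (Fin n) ℂ :=
  Matrix.of fun a b => pd j (fun v => A v a b) u

attribute [local instance] Matrix.linftyOpNormedAddCommGroup Matrix.linftyOpNormedRing
  Matrix.linftyOpNormedAlgebra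

variable {n : ℕ}

noncomputable def entryCLM (a b : Fin n) : Matrix (Fin n) (Fin n) ℂ →L[ℂ] ℂ :=
  LinearMap.toContinuousLinearMap (Matrix.entryLinearMap ℂ ℂ a b)

lemma diffOn_matrix {f : (Fin n → ℂ) → Matrix (Fin n) (Fin n) ℂ} {s : Set (Fin n → ℂ)}
    (h : ∀ a b, DifferentiableOn ℂ (fun u => f u a b) s) : DifferentiableOn ℂ f s := by
  have hf : f = fun u => ∑ a : Fin n, ∑ b : Fin n,
      (f u a b) • Matrix.single a b (1 : ℂ) := by
    funext u
    conv_lhs => rw [matrix_eq_sum_single (f u)]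
    simp [Matrix.smul_single, smul_eq_mul]
  rw [hf]
  apply DifferentiableOn.fun_sum; intro a _
  apply DifferentiableOn.fun_sum; intro b _
  exact (h a b).smul_const _

lemma mpd_eq_fderiv {f : (Fin n → ℂ) → Matrix (Fin n) (Fin n) ℂ} {u : Fin n → ℂ}
    (hf : DifferentiableAt ℂ f u) (j : Fin n) :
    mpd j f u = fderiv ℂ f u (Pi.single j 1) := by
  ext a b
  show pd j (fun v => f v a b) u = _
  unfold pd
  have h1 : (fun v => f v a b) = fun v => entryCLM a b (f v) := rfl
  have h2 := ((entryCLM a b).hasFDerivAt (x := f u)).comp u hf.hasFDerivAt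
  rw [h1]
  have h3 : fderiv ℂ (fun v => entryCLM a b (f v)) u = (entryCLM a b).comp (fderiv ℂ f u) :=
    h2.fderiv
  rw [h3]
  rfl

lemma fderiv_mul_single {f g : (Fin n → ℂ) → Matrix (Fin n) (Fin n) ℂ} {u : Fin n → ℂ}
    (hf : DifferentiableAt ℂ f u) (hg : DifferentiableAt ℂ g u) (w : Fin n → ℂ) :
    fderiv ℂ (fun v => f v * g v) u w
      = f u * fderiv ℂ g u w + fderiv ℂ f u w * g u := by
  rw [show fderiv ℂ (fun v => f v * g v) u = _ from (hf.hasFDerivAt.fun_mul' hg.hasFDerivAt).fderiv]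
  rfl

lemma omega_sum (u : Fin n → ℂ) (A : Matrix (Fin n) (Fin n) ℂ) :
    ∑ j : Fin n, omegaMat u A j = 0 := by
  ext a b
  simp only [Matrix.sum_apply, omegaMat, Matrix.of_apply, Matrix.zero_apply]
  by_cases h : a = b
  · simp [h]
  · simp only [if_neg h]
    rw [← Finset.sum_div, ← Finset.mul_sum]
    rw [Finset.sum_sub_distrib]
    simp

lemma clm_zero_of_single {L : (Fin n → ℂ) →L[ℂ] Matrix (Fin n) (Fin n) ℂ}
    (h : ∀ j, L (Pi.single j 1) = 0) : L = 0 := by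
  ext w
  have hw : w = ∑ j, (w j) • (Pi.single j 1 : Fin n → ℂ) := by
    conv_lhs => rw [← Finset.univ_sum_single w]
    refine Finset.sum_congr rfl fun j _ => ?_
    ext k
    by_cases hk : j = k <;> simp [Pi.single_apply, hk]
  rw [hw, map_sum]
  simp [h]

/-- under the non-normalized Schlesinger equations for
`B_k(u) := −E_k(A(u)+I)` with `γ_k = ω_k(u,A(u))`, if `G` is an invertible solution of
`∂_k G = (B_k/(u_k − u_i) + γ_k)G` (`k ≠ i`), `∂_i G = −∑_{k≠i}(B_k/(u_k − u_i) + γ_k)G`,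
then `u ↦ G(u)⁻¹ B_i(u) G(u)` is constant on `U`. -/
theorem stmt9 {n : ℕ} (U : Set (Fin n → ℂ)) (hUopen : IsOpen U) (hUconn : IsConnected U)
    (hdist : ∀ u ∈ U, ∀ a b : Fin n, a ≠ b → u a ≠ u b)
    (A : (Fin n → ℂ) → Matrix (Fin n) (Fin n) ℂ)
    (hdiff : ∀ a b : Fin n, DifferentiableOn ℂ (fun u => A u a b) U)
    (B : Fin n → (Fin n → ℂ) → Matrix (Fin n) (Fin n) ℂ)
    (hB : ∀ k u, B k u = -(Matrix.single k k (1 : ℂ) * (A u + 1)))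
    (hSch : ∀ u ∈ U,
      (∀ i k : Fin n, i ≠ k →
        mpd i (B k) u
          = (u i - u k)⁻¹ • (B i u * B k u - B k u * B i u)
            + (omegaMat u (A u) i * B k u - B k u * omegaMat u (A u) i))
      ∧ (∀ i : Fin n,
        mpd i (B i) u
          = -(∑ k ∈ Finset.univ.erase i,
                (u i - u k)⁻¹ • (B i u * B k u - B k u * B i u))
            + (omegaMat u (A u) i * B i u - B i u * omegaMat u (A u) i)))
    (i : Fin n)
    (G : (Fin n → ℂ) → Matrix (Fin n) (Fin n) ℂ)
    (hGdiff : ∀ a b : Fin n, DifferentiableOn ℂ (fun u => G u a b) U)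
    (hGinv : ∀ u ∈ U, IsUnit (G u))
    (hG : ∀ u ∈ U, ∀ k : Fin n, k ≠ i →
      mpd k G u = ((u k - u i)⁻¹ • B k u + omegaMat u (A u) k) * G u)
    (hGi : ∀ u ∈ U,
      mpd i G u
        = -((∑ k ∈ Finset.univ.erase i,
              ((u k - u i)⁻¹ • B k u + omegaMat u (A u) k)) * G u)) :
    ∀ u ∈ U, ∀ v ∈ U, (G u)⁻¹ * B i u * G u = (G v)⁻¹ * B i v * G v := by
  classical
  have hA : DifferentiableOn ℂ A U := diffOn_matrix hdiff
  have hGd : DifferentiableOn ℂ G U := diffOn_matrix hGdiff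
  have hBd : ∀ k, DifferentiableOn ℂ (B k) U := by
    intro k
    have hk : B k = fun u => -(Matrix.single k k (1 : ℂ) * (A u + 1)) := funext (hB k)
    rw [hk]
    exact ((differentiableOn_const _).mul (hA.add_const 1)).neg
  have hGinvd : DifferentiableOn ℂ (fun u => Ring.inverse (G u)) U := hGd.inverse hGinv
  set F : (Fin n → ℂ) → Matrix (Fin n) (Fin n) ℂ :=
    fun u => Ring.inverse (G u) * B i u * G u with hFdef
  have hFd : DifferentiableOn ℂ F U := (hGinvd.mul (hBd i)).mul hGd
  have hGF : ∀ v ∈ U, G v * F v = B i v * G v := by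
    intro v hv
    show G v * (Ring.inverse (G v) * B i v * G v) = _
    rw [← mul_assoc, ← mul_assoc, Ring.mul_inverse_cancel _ (hGinv v hv), one_mul]
  have key : ∀ u ∈ U, fderiv ℂ F u = 0 := by
    intro u hu
    have hnu : U ∈ nhds u := hUopen.mem_nhds hu
    have hGat : DifferentiableAt ℂ G u := (hGd u hu).differentiableAt hnu
    have hFat : DifferentiableAt ℂ F u := (hFd u hu).differentiableAt hnu
    have hBat : ∀ k, DifferentiableAt ℂ (B k) u := fun k => ((hBd k) u hu).differentiableAt hnu
    have heq : (fun v => G v * F v) =ᶠ[nhds u] (fun v => B i v * G v) :=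
      Filter.eventuallyEq_of_mem hnu fun v hv => hGF v hv
    apply clm_zero_of_single
    intro j
    have hL := fderiv_mul_single hGat hFat (Pi.single j 1)
    have hR := fderiv_mul_single (hBat i) hGat (Pi.single j 1)
    rw [heq.fderiv_eq, hR, ← mpd_eq_fderiv hGat j, ← mpd_eq_fderiv (hBat i) j] at hL
    -- hL : G u * DF + mpd j G u * F u = B i u * mpd j G u + mpd j (B i) u * G u
    have hmain : G u * fderiv ℂ F u (Pi.single j 1)
        = mpd j (B i) u * G u + B i u * mpd j G u - mpd j G u * F u := by
      have := eq_sub_of_add_eq hL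
      rw [this]; abel
    have hzero : G u * fderiv ℂ F u (Pi.single j 1) = 0 := by
      rw [hmain]
      by_cases hj : j = i
      · subst hj
        rw [hGi u hu, (hSch u hu).2 j]
        set S := ∑ k ∈ Finset.univ.erase j, ((u k - u j)⁻¹ • B k u + omegaMat u (A u) k) with hS
        have hGFu := hGF u hu
        have hkey : -(∑ k ∈ Finset.univ.erase j,
              (u j - u k)⁻¹ • (B j u * B k u - B k u * B j u))
            + (omegaMat u (A u) j * B j u - B j u * omegaMat u (A u) j)
            = B j u * S - S * B j u := by
          have hserase : ∑ k ∈ Finset.univ.erase j, omegaMat u (A u) k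
              = -(omegaMat u (A u) j) := by
            have h0 := omega_sum u (A u)
            rw [← Finset.add_sum_erase _ _ (Finset.mem_univ j)] at h0
            exact eq_neg_of_add_eq_zero_right h0
          symm
          rw [hS, Finset.mul_sum, Finset.sum_mul, ← Finset.sum_sub_distrib]
          have hterm : ∀ k ∈ Finset.univ.erase j,
              B j u * ((u k - u j)⁻¹ • B k u + omegaMat u (A u) k)
                - ((u k - u j)⁻¹ • B k u + omegaMat u (A u) k) * B j u
              = -((u j - u k)⁻¹ • (B j u * B k u - B k u * B j u))
                  + (B j u * omegaMat u (A u) k - omegaMat u (A u) k * B j u) := by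
            intro k hk
            have hc : (u k - u j)⁻¹ = -(u j - u k)⁻¹ := by rw [← neg_sub, inv_neg]
            rw [hc]
            simp only [neg_smul, smul_sub, sub_eq_add_neg, mul_add, add_mul, mul_neg, neg_mul,
              mul_smul_comm, smul_mul_assoc, neg_neg, neg_add]
            module
          rw [Finset.sum_congr rfl hterm, Finset.sum_add_distrib, Finset.sum_sub_distrib,
            ← Finset.mul_sum, ← Finset.sum_mul, hserase]
          simp only [Finset.sum_neg_distrib, mul_neg, neg_mul]
          abel
        rw [hkey]
        have h1 : B j u * -(S * G u) = -((B j u * S) * G u) := by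
          rw [mul_neg, mul_assoc]
        have h2 : -(S * G u) * F u = -((S * B j u) * G u) := by
          rw [neg_mul, mul_assoc, hGFu, ← mul_assoc]
        rw [h1, h2]
        simp only [sub_mul, mul_assoc]
        abel
      · rw [hG u hu j hj, (hSch u hu).1 j i hj]
        set Om := (u j - u i)⁻¹ • B j u + omegaMat u (A u) j with hOm
        have h2 : Om * G u * F u = Om * (B i u * G u) := by
          rw [mul_assoc, hGF u hu]
        rw [h2]
        have hkey : (u j - u i)⁻¹ • (B j u * B i u - B i u * B j u)
            + (omegaMat u (A u) j * B i u - B i u * omegaMat u (A u) j)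
            = Om * B i u - B i u * Om := by
          rw [hOm]
          simp only [mul_add, add_mul, mul_smul_comm, smul_mul_assoc, smul_sub]
          abel
        rw [hkey]
        simp only [sub_mul, mul_assoc]
        abel
    have := congrArg (fun X => Ring.inverse (G u) * X) hzero
    simpa [← mul_assoc, Ring.inverse_mul_cancel _ (hGinv u hu)] using this
  -- local constancy
  have hloc : ∀ u ∈ U, ∃ ε > 0, Metric.ball u ε ⊆ U ∧ ∀ v ∈ Metric.ball u ε, F v = F u := by
    intro u hu
    obtain ⟨ε, hε, hball⟩ := Metric.isOpen_iff.mp hUopen u hu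
    refine ⟨ε, hε, hball, fun v hv => ?_⟩
    exact (convex_ball u ε).is_const_of_fderivWithin_eq_zero (hFd.mono hball)
      (fun x hx => by
        rw [fderivWithin_of_isOpen Metric.isOpen_ball hx]; exact key x (hball hx))
      hv (Metric.mem_ball_self hε)
  have hconst : ∀ u ∈ U, ∀ v ∈ U, F u = F v := by
    intro u hu v hv
    set S1 : Set (Fin n → ℂ) := {x | x ∈ U ∧ F x = F v} with hS1
    set S2 : Set (Fin n → ℂ) := {x | x ∈ U ∧ F x ≠ F v} with hS2
    have hS1o : IsOpen S1 := by
      rw [Metric.isOpen_iff]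
      rintro x ⟨hxU, hxF⟩
      obtain ⟨ε, hε, hball, hcst⟩ := hloc x hxU
      exact ⟨ε, hε, fun y hy => ⟨hball hy, (hcst y hy).trans hxF⟩⟩
    have hS2o : IsOpen S2 := by
      rw [Metric.isOpen_iff]
      rintro x ⟨hxU, hxF⟩
      obtain ⟨ε, hε, hball, hcst⟩ := hloc x hxU
      exact ⟨ε, hε, fun y hy => ⟨hball hy, fun h => hxF ((hcst y hy).symm.trans h)⟩⟩
    have hdisj : Disjoint S1 S2 := by
      rw [Set.disjoint_left]
      rintro x ⟨_, h1⟩ ⟨_, h2⟩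
      exact h2 h1
    have hsub : U ⊆ S1 ∪ S2 := fun x hx => by
      by_cases h : F x = F v
      · exact Or.inl ⟨hx, h⟩
      · exact Or.inr ⟨hx, h⟩
    have hne : (U ∩ S1).Nonempty := ⟨v, hv, hv, rfl⟩
    have := hUconn.isPreconnected.subset_left_of_subset_union hS1o hS2o hdisj hsub hne
    exact (this hu).2
  intro u hu v hv
  have h1 : (G u)⁻¹ = Ring.inverse (G u) := Matrix.nonsing_inv_eq_ringInverse _
  have h2 : (G v)⁻¹ = Ring.inverse (G v) := Matrix.nonsing_inv_eq_ringInverse _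
  rw [h1, h2]
  exact hconst u hu v hv
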